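/- Let μ, ω : [0,1] → ℝ be continuous functions, and suppose there exist 0 < s₁ < s₂ such that ∫_0^1 μ(α) s^α dα = ∫_0^1 ω(α) s^α dα for every s ∈ (s₁, s₂). Then μ(α) = ω(α) for every α ∈ [0,1]. (This injectivity of the weight function ↦ Laplace-symbol map is the core uniqueness mechanism in the determination of the weight μ of the distributed order derivative from point observation data.) -/

import Mathlib

open MeasureTheory Set Filter

private lemma real_exp_eq_tsum (x : ℝ) :
    Real.exp x = ∑' n : ℕ, x ^ n / (n.factorial : ℝ) := by
  simp [Real.exp_eq_exp_ℝ, NormedSpace.exp_eq_tsum_div]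

private lemma aux_integrableOn {g : ℝ → ℝ} (hg : ContinuousOn g (Set.Icc 0 1)) :
    IntegrableOn g (Set.Ioc (0:ℝ) 1) :=
  hg.integrableOn_Icc.mono_set Set.Ioc_subset_Icc_self

private lemma aux_bound {g : ℝ → ℝ} (hg : ContinuousOn g (Set.Icc 0 1)) :
    ∃ C : ℝ, 0 ≤ C ∧ ∀ a ∈ Set.Icc (0:ℝ) 1, |g a| ≤ C := by
  obtain ⟨C, hC⟩ := isCompact_Icc.exists_bound_of_continuousOn hg
  exact ⟨max C 0, le_max_right _ _, fun a ha => (hC a ha).trans (le_max_left _ _)⟩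

private lemma aux_setint_abs_le {g : ℝ → ℝ} {C : ℝ}
    (hg : ContinuousOn g (Set.Icc 0 1)) (hC : ∀ a ∈ Set.Icc (0:ℝ) 1, |g a| ≤ C) :
    |∫ a in Set.Ioc (0:ℝ) 1, g a| ≤ C := by
  have h := norm_setIntegral_le_of_norm_le_const (μ := volume) (s := Set.Ioc (0:ℝ) 1) (f := g)
      measure_Ioc_lt_top
      (fun x hx => by simpa using hC x (Set.Ioc_subset_Icc_self hx))
  simpa [Real.volume_Ioc] using h

private lemma aux_expand {g : ℝ → ℝ} (hg : ContinuousOn g (Set.Icc 0 1)) (t : ℝ) :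
    ∫ a in Set.Ioc (0:ℝ) 1, g a * Real.exp (a * t)
      = ∑' n : ℕ, (∫ a in Set.Ioc (0:ℝ) 1, g a * a ^ n) * t ^ n / (n.factorial : ℝ) := by
  obtain ⟨C, hC0, hC⟩ := aux_bound hg
  set F : ℕ → ℝ → ℝ := fun n a => g a * ((a * t) ^ n / (n.factorial : ℝ)) with hF
  have hFc : ∀ n, ContinuousOn (F n) (Set.Icc 0 1) := fun n =>
    hg.mul (Continuous.continuousOn (by continuity))
  have hFi : ∀ n, IntegrableOn (F n) (Set.Ioc 0 1) := fun n =>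
    ((hFc n).integrableOn_Icc).mono_set Set.Ioc_subset_Icc_self
  have hptw : ∀ a : ℝ, g a * Real.exp (a * t) = ∑' n, F n a := by
    intro a
    rw [real_exp_eq_tsum, ← tsum_mul_left]
  have hbound : ∀ n, ∀ a ∈ Set.Ioc (0:ℝ) 1, ‖F n a‖ ≤ C * (|t| ^ n / (n.factorial : ℝ)) := by
    intro n a ha
    have ha' : a ∈ Set.Icc (0:ℝ) 1 := Set.Ioc_subset_Icc_self ha
    have h1 : |a| ≤ 1 := by rw [abs_of_nonneg ha'.1]; exact ha'.2
    have h2 : |a * t| ≤ |t| := by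
      rw [abs_mul]
      nlinarith [abs_nonneg t, abs_nonneg a]
    have h3 : ‖F n a‖ = |g a| * (|a * t| ^ n / (n.factorial : ℝ)) := by
      simp [hF, abs_mul, abs_div, abs_pow, Nat.abs_cast]
    rw [h3]
    gcongr
    exact hC a ha'
  have hIbound : ∀ n, (∫ a in Set.Ioc (0:ℝ) 1, ‖F n a‖) ≤ C * (|t| ^ n / (n.factorial : ℝ)) := by
    intro n
    have h := integral_mono_of_nonneg (μ := volume.restrict (Set.Ioc (0:ℝ) 1))
        (f := fun a => ‖F n a‖) (g := fun _ => C * (|t| ^ n / (n.factorial : ℝ)))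
        (Eventually.of_forall fun a => norm_nonneg _)
        (integrableOn_const measure_Ioc_lt_top.ne)
        ((ae_restrict_iff' measurableSet_Ioc).2 (Eventually.of_forall (hbound n)))
    simpa [Real.volume_Ioc] using h
  have hsumm : Summable (fun n => ∫ a in Set.Ioc (0:ℝ) 1, ‖F n a‖) :=
    Summable.of_nonneg_of_le (fun n => integral_nonneg fun a => norm_nonneg _) hIbound
      ((Real.summable_pow_div_factorial |t|).mul_left C)
  have hkey := MeasureTheory.integral_tsum_of_summable_integral_norm hFi hsumm
  calc ∫ a in Set.Ioc (0:ℝ) 1, g a * Real.exp (a * t)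
      = ∫ a in Set.Ioc (0:ℝ) 1, ∑' n, F n a :=
        integral_congr_ae (Eventually.of_forall fun a => hptw a)
    _ = ∑' n, ∫ a in Set.Ioc (0:ℝ) 1, F n a := hkey.symm
    _ = ∑' n : ℕ, (∫ a in Set.Ioc (0:ℝ) 1, g a * a ^ n) * t ^ n / (n.factorial : ℝ) := by
        refine tsum_congr fun n => ?_
        have h4 : ∀ a : ℝ, F n a = (t ^ n / (n.factorial : ℝ)) * (g a * a ^ n) := by
          intro a
          simp only [hF]
          rw [mul_pow]
          ring
        rw [integral_congr_ae (Eventually.of_forall h4), integral_const_mul]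
        ring

private lemma aux_shift_summable {e : ℕ → ℝ} {r : ℝ} (hr : r ≠ 0)
    (hs : Summable fun k => e k * r ^ k) (m : ℕ) :
    Summable fun k => e (k + m) * r ^ k := by
  have h1 := ((summable_nat_add_iff m).2 hs).mul_left ((r ^ m)⁻¹)
  refine h1.congr fun k => ?_
  have hrm : r ^ m ≠ 0 := pow_ne_zero _ hr
  field_simp [pow_add]
  ring

private lemma aux_coeff_zero (d : ℕ → ℝ)
    (hd : ∀ r : ℝ, 0 ≤ r → Summable fun n => |d n| * r ^ n)
    (δ : ℝ) (hδ : 0 < δ)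
    (hv : ∀ x : ℝ, |x| < δ → ∑' n, d n * x ^ n = 0) :
    ∀ n, d n = 0 := by
  have habs : ∀ x : ℝ, Summable fun k => |d k| * |x| ^ k := fun x => hd |x| (abs_nonneg x)
  have hsum : ∀ x : ℝ, Summable fun k => d k * x ^ k := by
    intro x
    exact ((habs x).congr fun k => by rw [abs_mul, abs_pow]).of_abs
  intro n
  induction n using Nat.strong_induction_on with
  | _ n ih =>
    set r := δ / 2 with hrdef
    have hr0 : 0 < r := by positivity
    have hrδ : r < δ := by rw [hrdef]; linarith
    have hKsum : Summable fun k => |d (k + (n + 1))| * r ^ k :=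
      aux_shift_summable (ne_of_gt hr0) (hd r hr0.le) (n + 1)
    set K := ∑' k, |d (k + (n + 1))| * r ^ k with hKdef
    have hK0 : 0 ≤ K := tsum_nonneg fun k => by positivity
    have hest : ∀ x : ℝ, 0 < |x| → |x| ≤ r → |d n| ≤ K * |x| := by
      intro x hx0 hxr
      have hxδ : |x| < δ := lt_of_le_of_lt hxr hrδ
      have hxne : x ≠ 0 := fun hc => by simp [hc] at hx0
      have h1 := Summable.sum_add_tsum_nat_add (f := fun i => d i * x ^ i) n (hsum x)
      have h2 : ∑ i ∈ Finset.range n, d i * x ^ i = 0 :=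
        Finset.sum_eq_zero fun i hi => by rw [ih i (Finset.mem_range.mp hi), zero_mul]
      have h3 : ∑' i : ℕ, d (i + n) * x ^ (i + n) = 0 := by
        have hvx := hv x hxδ
        rw [hvx] at h1
        rw [h2, zero_add] at h1
        exact h1
      have h4 : ∑' i : ℕ, d (i + n) * x ^ (i + n) = x ^ n * ∑' i : ℕ, d (i + n) * x ^ i := by
        rw [← tsum_mul_left]
        exact tsum_congr fun i => by rw [pow_add]; ring
      have h5 : ∑' i : ℕ, d (i + n) * x ^ i = 0 := by
        rw [h4] at h3
        exact (mul_eq_zero.mp h3).resolve_left (pow_ne_zero _ hxne)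
      have hs6 : Summable fun i => d (i + n) * x ^ i := aux_shift_summable hxne (hsum x) n
      have h7 := Summable.sum_add_tsum_nat_add (f := fun i => d (i + n) * x ^ i) 1 hs6
      rw [h5] at h7
      simp only [Finset.sum_range_one, Nat.zero_add, pow_zero, mul_one] at h7
      set T := ∑' i : ℕ, d (i + 1 + n) * x ^ (i + 1) with hTdef
      have hdn : d n = -T := by linarith
      have hsT : Summable fun i => |d (i + 1 + n)| * |x| ^ (i + 1) := by
        have h8 := (aux_shift_summable (abs_ne_zero.mpr hxne) (habs x) (n + 1)).mul_left |x|
        refine h8.congr fun i => ?_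
        have hidx : i + 1 + n = i + (n + 1) := by omega
        rw [hidx]
        ring
      have hsT' : Summable fun i => ‖d (i + 1 + n) * x ^ (i + 1)‖ := by
        refine hsT.congr fun i => ?_
        rw [Real.norm_eq_abs, abs_mul, abs_pow]
      have habsT : |T| ≤ ∑' i : ℕ, |d (i + 1 + n)| * |x| ^ (i + 1) := by
        have h8 := norm_tsum_le_tsum_norm hsT'
        rw [Real.norm_eq_abs] at h8
        refine h8.trans_eq (tsum_congr fun i => ?_)
        rw [Real.norm_eq_abs, abs_mul, abs_pow]
      have hle : ∀ i : ℕ, |d (i + 1 + n)| * |x| ^ (i + 1)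
          ≤ |x| * (|d (i + (n + 1))| * r ^ i) := by
        intro i
        have hidx : i + 1 + n = i + (n + 1) := by omega
        rw [hidx]
        have hxp : |x| ^ (i + 1) = |x| * |x| ^ i := by ring
        rw [hxp]
        have hxpow : |x| ^ i ≤ r ^ i := pow_le_pow_left₀ (abs_nonneg x) hxr i
        calc |d (i + (n + 1))| * (|x| * |x| ^ i)
            = |x| * (|d (i + (n + 1))| * |x| ^ i) := by ring
          _ ≤ |x| * (|d (i + (n + 1))| * r ^ i) := by gcongr
      have h9 := Summable.tsum_le_tsum hle hsT (hKsum.mul_left |x|)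
      have h10 : ∑' i : ℕ, |x| * (|d (i + (n + 1))| * r ^ i) = K * |x| := by
        rw [tsum_mul_left, ← hKdef, mul_comm]
      calc |d n| = |T| := by rw [hdn, abs_neg]
        _ ≤ ∑' i : ℕ, |d (i + 1 + n)| * |x| ^ (i + 1) := habsT
        _ ≤ ∑' i : ℕ, |x| * (|d (i + (n + 1))| * r ^ i) := h9
        _ = K * |x| := h10
    by_contra hne
    have hdabs : 0 < |d n| := abs_pos.mpr hne
    set y := min r (|d n| / (2 * (K + 1))) with hydef
    have hy0 : 0 < y := lt_min hr0 (by positivity)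
    have hyabs : |y| = y := abs_of_pos hy0
    have h11 := hest y (by rw [hyabs]; exact hy0) (by rw [hyabs]; exact min_le_left _ _)
    rw [hyabs] at h11
    have hy2 : y ≤ |d n| / (2 * (K + 1)) := min_le_right _ _
    have h12 : K * y ≤ (K + 1) * (|d n| / (2 * (K + 1))) := by nlinarith
    have h13 : (K + 1) * (|d n| / (2 * (K + 1))) = |d n| / 2 := by
      field_simp
    linarith

private lemma aux_moments_zero {g : ℝ → ℝ} (hg : ContinuousOn g (Set.Icc 0 1))
    (hm : ∀ n : ℕ, (∫ a in Set.Ioc (0:ℝ) 1, g a * a ^ n) = 0) :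
    ∀ a ∈ Set.Icc (0:ℝ) 1, g a = 0 := by
  obtain ⟨C, hC0, hC⟩ := aux_bound hg
  have hpoly : ∀ p : Polynomial ℝ, (∫ a in Set.Ioc (0:ℝ) 1, g a * p.eval a) = 0 := by
    intro p
    have hrw : ∀ a : ℝ, g a * p.eval a
        = ∑ i ∈ Finset.range (p.natDegree + 1), p.coeff i * (g a * a ^ i) := by
      intro a
      rw [Polynomial.eval_eq_sum_range, Finset.mul_sum]
      exact Finset.sum_congr rfl fun i _ => by ring
    rw [integral_congr_ae (Eventually.of_forall hrw), integral_finset_sum]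
    · exact Finset.sum_eq_zero fun i _ => by rw [integral_const_mul, hm i, mul_zero]
    · intro i _
      exact (aux_integrableOn (hg.mul ((continuous_pow i).continuousOn))).const_mul _
  have hI0 : (∫ a in Set.Ioc (0:ℝ) 1, g a * g a) = 0 := by
    have hnn : 0 ≤ ∫ a in Set.Ioc (0:ℝ) 1, g a * g a :=
      integral_nonneg fun a => mul_self_nonneg _
    have hle : ∀ ε : ℝ, 0 < ε → (∫ a in Set.Ioc (0:ℝ) 1, g a * g a) ≤ C * ε := by
      intro ε hε
      obtain ⟨p, hp⟩ := exists_polynomial_near_of_continuousOn 0 1 g hg ε hε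
      have hpc : ContinuousOn (fun a => g a * (g a - p.eval a)) (Set.Icc 0 1) :=
        hg.mul (hg.sub (Polynomial.continuous p).continuousOn)
      have hsplit : (∫ a in Set.Ioc (0:ℝ) 1, g a * g a)
          = (∫ a in Set.Ioc (0:ℝ) 1, g a * (g a - p.eval a))
            + ∫ a in Set.Ioc (0:ℝ) 1, g a * p.eval a := by
        rw [← integral_add (aux_integrableOn hpc)
            (aux_integrableOn (g := fun a => g a * p.eval a) (hg.mul (Polynomial.continuous p).continuousOn))]
        exact integral_congr_ae (Eventually.of_forall fun a => by ring)
      rw [hsplit, hpoly p, add_zero]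
      have hbd : ∀ a ∈ Set.Ioc (0:ℝ) 1, ‖g a * (g a - p.eval a)‖ ≤ C * ε := by
        intro a ha
        have ha' : a ∈ Set.Icc (0:ℝ) 1 := Set.Ioc_subset_Icc_self ha
        have h1 : |g a - p.eval a| ≤ ε := by
          rw [abs_sub_comm]
          exact (hp a ha').le
        rw [Real.norm_eq_abs, abs_mul]
        exact mul_le_mul (hC a ha') h1 (abs_nonneg _) hC0
      have h2 := norm_setIntegral_le_of_norm_le_const (μ := volume) (s := Set.Ioc (0:ℝ) 1)
          measure_Ioc_lt_top hbd
      have h3 : (∫ a in Set.Ioc (0:ℝ) 1, g a * (g a - p.eval a))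
          ≤ |∫ a in Set.Ioc (0:ℝ) 1, g a * (g a - p.eval a)| := le_abs_self _
      rw [Real.norm_eq_abs] at h2
      simp only [Real.volume_real_Ioc_of_le zero_le_one, Real.volume_Ioc, sub_zero, ENNReal.toReal_ofReal zero_le_one, mul_one] at h2
      linarith
    refine le_antisymm ?_ hnn
    refine le_of_forall_pos_le_add ?_
    intro ε hε
    have h4 := hle (ε / (C + 1)) (by positivity)
    have h5 : C * (ε / (C + 1)) ≤ ε := by
      rw [div_eq_inv_mul]
      have hC1 : (0:ℝ) < C + 1 := by linarith
      rw [mul_comm ((C + 1)⁻¹) ε, ← mul_assoc]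
      calc C * ε * (C + 1)⁻¹ ≤ (C + 1) * ε * (C + 1)⁻¹ := by gcongr; linarith
        _ = ε := by field_simp
    linarith
  have hae : (fun a => g a * g a) =ᵐ[volume.restrict (Set.Ioc (0:ℝ) 1)] 0 := by
    refine (integral_eq_zero_iff_of_nonneg_ae ?_ ?_).mp hI0
    · exact Eventually.of_forall fun a => mul_self_nonneg _
    · exact aux_integrableOn (hg.mul hg)
  intro x₀ hx₀
  by_contra hne
  have hgx : 0 < |g x₀| := abs_pos.mpr hne
  obtain ⟨η, hη0, hη⟩ := Metric.continuousWithinAt_iff.mp (hg x₀ hx₀) (|g x₀| / 2) (by positivity)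
  set l := max (x₀ - η) 0 with hldef
  set u := min (x₀ + η) 1 with hudef
  have hx1 := hx₀.1
  have hx2 := hx₀.2
  have hlu : l < u := by
    rw [hldef, hudef]
    simp only [lt_min_iff, max_lt_iff]
    refine ⟨⟨by linarith, by linarith⟩, ⟨by linarith, by linarith⟩⟩
  have hmem : ∀ y ∈ Set.Ioo l u, g y * g y ≠ 0 ∧ y ∈ Set.Ioc (0:ℝ) 1 := by
    intro y hy
    have hyl : l < y := hy.1
    have hyu : y < u := hy.2
    have hy0 : 0 < y := lt_of_le_of_lt (le_max_right _ _) hyl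
    have hy1 : y ≤ 1 := le_of_lt (lt_of_lt_of_le hyu (min_le_right _ _))
    have hyIcc : y ∈ Set.Icc (0:ℝ) 1 := ⟨hy0.le, hy1⟩
    have hdist : dist y x₀ < η := by
      rw [Real.dist_eq, abs_lt]
      constructor
      · have := lt_of_le_of_lt (le_max_left _ _) hyl
        linarith
      · have := lt_of_lt_of_le hyu (min_le_left _ _)
        linarith
    have hgy := hη hyIcc hdist
    rw [Real.dist_eq] at hgy
    have hglow : |g x₀| / 2 < |g y| := by
      have := abs_sub_abs_le_abs_sub (g x₀) (g y)
      rw [abs_sub_comm (g y) (g x₀)] at hgy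
      linarith
    have hgyne : g y ≠ 0 := by
      intro hc
      rw [hc, abs_zero] at hglow
      linarith
    exact ⟨mul_ne_zero hgyne hgyne, ⟨hy0, hy1⟩⟩
  have hnull : volume.restrict (Set.Ioc (0:ℝ) 1) {a | g a * g a ≠ 0} = 0 := by
    have h6 := hae
    rw [Filter.EventuallyEq, ae_iff] at h6
    simpa using h6
  have h7 : volume.restrict (Set.Ioc (0:ℝ) 1) (Set.Ioo l u) = 0 :=
    measure_mono_null (fun y hy => (hmem y hy).1) hnull
  rw [Measure.restrict_apply' measurableSet_Ioc,
    Set.inter_eq_self_of_subset_left (fun y hy => (hmem y hy).2)] at h7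
  rw [Real.volume_Ioo] at h7
  rw [ENNReal.ofReal_eq_zero] at h7
  linarith

/-- Injectivity of the weight-to-Laplace-symbol map for distributed order derivatives:
if `μ, ω` are continuous on `[0,1]` and `∫_0^1 μ(α) s^α dα = ∫_0^1 ω(α) s^α dα` for all
`s` in some nonempty open interval `(s₁, s₂) ⊂ (0,∞)`, then `μ = ω` on `[0,1]`. -/
theorem weight_symbol_injective (μ ω : ℝ → ℝ)
    (hμ : ContinuousOn μ (Set.Icc 0 1)) (hω : ContinuousOn ω (Set.Icc 0 1))
    (s₁ s₂ : ℝ) (hs₁ : 0 < s₁) (hs₁₂ : s₁ < s₂)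
    (h : ∀ s ∈ Set.Ioo s₁ s₂,
      (∫ a in (0 : ℝ)..1, μ a * s ^ a) = ∫ a in (0 : ℝ)..1, ω a * s ^ a) :
    ∀ a ∈ Set.Icc (0 : ℝ) 1, μ a = ω a := by
  intro a₀ ha₀
  have hs₂ : 0 < s₂ := hs₁.trans hs₁₂
  set f : ℝ → ℝ := fun a => μ a - ω a with hfdef
  have hf : ContinuousOn f (Set.Icc 0 1) := hμ.sub hω
  set t₁ := Real.log s₁ with ht₁def
  set t₂ := Real.log s₂ with ht₂def
  have ht : t₁ < t₂ := Real.log_lt_log hs₁ hs₁₂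
  set t₀ := (t₁ + t₂) / 2 with ht₀def
  set δ := (t₂ - t₁) / 2 with hδdef
  have hδ : 0 < δ := by rw [hδdef]; linarith
  have hec : ∀ c : ℝ, Continuous fun a : ℝ => Real.exp (a * c) := fun c =>
    Real.continuous_exp.comp (continuous_mul_right c)
  set g : ℝ → ℝ := fun a => f a * Real.exp (a * t₀) with hgdef
  have hgc : ContinuousOn g (Set.Icc 0 1) := hf.mul (hec t₀).continuousOn
  have key : ∀ x : ℝ, |x| < δ → (∫ a in Set.Ioc (0:ℝ) 1, g a * Real.exp (a * x)) = 0 := by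
    intro x hx
    obtain ⟨hx1, hx2⟩ := abs_lt.mp hx
    have ht₀x1 : t₁ < t₀ + x := by rw [ht₀def]; rw [hδdef] at hx1; linarith
    have ht₀x2 : t₀ + x < t₂ := by rw [ht₀def]; rw [hδdef] at hx2; linarith
    set s := Real.exp (t₀ + x) with hsdef
    have hsmem : s ∈ Set.Ioo s₁ s₂ := by
      constructor
      · rw [hsdef, show s₁ = Real.exp t₁ from (Real.exp_log hs₁).symm]
        exact Real.exp_lt_exp.mpr ht₀x1
      · rw [hsdef, show s₂ = Real.exp t₂ from (Real.exp_log hs₂).symm]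
        exact Real.exp_lt_exp.mpr ht₀x2
    have h0 := h s hsmem
    rw [intervalIntegral.integral_of_le zero_le_one,
      intervalIntegral.integral_of_le zero_le_one] at h0
    have hpow : ∀ a : ℝ, s ^ a = Real.exp (a * (t₀ + x)) := by
      intro a
      rw [hsdef, Real.rpow_def_of_pos (Real.exp_pos _), Real.log_exp, mul_comm]
    have hμi : IntegrableOn (fun a => μ a * Real.exp (a * (t₀ + x))) (Set.Ioc (0:ℝ) 1) :=
      aux_integrableOn (hμ.mul (hec _).continuousOn)
    have hωi : IntegrableOn (fun a => ω a * Real.exp (a * (t₀ + x))) (Set.Ioc (0:ℝ) 1) :=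
      aux_integrableOn (hω.mul (hec _).continuousOn)
    have h0' : (∫ a in Set.Ioc (0:ℝ) 1, μ a * Real.exp (a * (t₀ + x)))
        = ∫ a in Set.Ioc (0:ℝ) 1, ω a * Real.exp (a * (t₀ + x)) := by
      calc (∫ a in Set.Ioc (0:ℝ) 1, μ a * Real.exp (a * (t₀ + x)))
          = ∫ a in Set.Ioc (0:ℝ) 1, μ a * s ^ a :=
            integral_congr_ae (Eventually.of_forall fun a => by simp only [hpow a])
        _ = ∫ a in Set.Ioc (0:ℝ) 1, ω a * s ^ a := h0
        _ = ∫ a in Set.Ioc (0:ℝ) 1, ω a * Real.exp (a * (t₀ + x)) :=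
            integral_congr_ae (Eventually.of_forall fun a => by simp only [hpow a])
    have hsub : (∫ a in Set.Ioc (0:ℝ) 1,
        (μ a * Real.exp (a * (t₀ + x)) - ω a * Real.exp (a * (t₀ + x)))) = 0 := by
      rw [integral_sub hμi hωi, h0', sub_self]
    refine Eq.trans (integral_congr_ae (Eventually.of_forall fun a => ?_)) hsub
    have hee : Real.exp (a * t₀) * Real.exp (a * x) = Real.exp (a * (t₀ + x)) := by
      rw [← Real.exp_add, mul_add]
    calc g a * Real.exp (a * x)
        = f a * (Real.exp (a * t₀) * Real.exp (a * x)) := by rw [hgdef]; ring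
      _ = f a * Real.exp (a * (t₀ + x)) := by rw [hee]
      _ = μ a * Real.exp (a * (t₀ + x)) - ω a * Real.exp (a * (t₀ + x)) := by
          rw [hfdef]; ring
  set M : ℕ → ℝ := fun n => ∫ a in Set.Ioc (0:ℝ) 1, g a * a ^ n with hMdef
  obtain ⟨C, hC0, hC⟩ := aux_bound hgc
  have hMb : ∀ n, |M n| ≤ C := by
    intro n
    refine aux_setint_abs_le (hgc.mul ((continuous_pow n).continuousOn)) ?_
    intro a ha
    rw [abs_mul, abs_pow]
    have h1 : |a| ≤ 1 := by rw [abs_of_nonneg ha.1]; exact ha.2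
    calc |g a| * |a| ^ n ≤ C * 1 :=
          mul_le_mul (hC a ha) (pow_le_one₀ (abs_nonneg a) h1)
            (pow_nonneg (abs_nonneg a) n) hC0
      _ = C := mul_one C
  set d : ℕ → ℝ := fun n => M n / (n.factorial : ℝ) with hddef
  have hd : ∀ r : ℝ, 0 ≤ r → Summable fun n => |d n| * r ^ n := by
    intro r hr
    refine Summable.of_nonneg_of_le (fun n => by positivity) (fun n => ?_)
      ((Real.summable_pow_div_factorial r).mul_left C)
    simp only [hddef, abs_div, Nat.abs_cast]
    have hfacpos : (0:ℝ) < (n.factorial : ℝ) := by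
      exact_mod_cast n.factorial_pos
    calc |M n| / (n.factorial : ℝ) * r ^ n ≤ C / (n.factorial : ℝ) * r ^ n := by
          gcongr
          exact hMb n
      _ = C * (r ^ n / (n.factorial : ℝ)) := by ring
  have hv : ∀ x : ℝ, |x| < δ → ∑' n, d n * x ^ n = 0 := by
    intro x hx
    have he := aux_expand hgc x
    rw [key x hx] at he
    have heq : ∑' n, d n * x ^ n
        = ∑' n : ℕ, (∫ a in Set.Ioc (0:ℝ) 1, g a * a ^ n) * x ^ n / (n.factorial : ℝ) := by
      refine tsum_congr fun n => ?_
      simp only [hddef, hMdef]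
      ring
    rw [heq]
    exact he.symm
  have hM0 : ∀ n : ℕ, (∫ a in Set.Ioc (0:ℝ) 1, g a * a ^ n) = 0 := by
    intro n
    have hz := aux_coeff_zero d hd δ hδ hv n
    simp only [hddef] at hz
    have hfac : (n.factorial : ℝ) ≠ 0 := Nat.cast_ne_zero.mpr n.factorial_ne_zero
    have := (div_eq_zero_iff.mp hz).resolve_right hfac
    simpa [hMdef] using this
  have hg0 := aux_moments_zero hgc hM0 a₀ ha₀
  have hexp : Real.exp (a₀ * t₀) ≠ 0 := (Real.exp_pos _).ne'
  have hg0' : f a₀ * Real.exp (a₀ * t₀) = 0 := hg0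
  have hfa : μ a₀ - ω a₀ = 0 := (mul_eq_zero.mp hg0').resolve_right hexp
  linarith [hfa]
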